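/- arXiv:1808.10385 — 2 statements merged into one kernel-verified Lean document; each statement's English description precedes it below -/
import Mathlib

section
/- (The basic Jellium example satisfies the Jellium condition but violates the Wiener condition.) Let N ≥ 2 and let σ₁ be the N·ℤ³-periodic function with σ₁(x) = eZ for x ∈ [−1/2,1/2)³ and σ₁(x) = 0 for x ∈ [−N/2,N/2)³ \ [−1/2,1/2)³, where e, Z > 0. Then: (i) σ̂₁(ξ) = eZ·∏_{j=1}^{3} (2 sin(ξⱼ/2)/ξⱼ) for every ξ ∈ Γ*_N with all coordinates nonzero (each factor replaced by 1 when ξⱼ = 0); in particular σ̂₁(ξ) = 0 for all ξ ∈ Γ*_1 \ {0}, so the Jellium condition holds; (ii) for every θ = (0,θ₂,θ₃) ∈ Γ*_N \ Γ*_1, the (1,1) entry of Σ(θ) is 0, hence Σ(θ) is not positive definite and the Wiener condition fails. -/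
noncomputable section

namespace SPN

open MeasureTheory Finset
open scoped Real

/-- Points of `ℝ³`. -/
abbrev V3 : Type := Fin 3 → ℝ

/-- Euclidean dot product on `ℝ³`. -/
def dotP (v w : V3) : ℝ := ∑ i, v i * w i

/-- Squared Euclidean norm on `ℝ³`. -/
def nsqV (v : V3) : ℝ := ∑ i, v i ^ 2

/-- The fundamental cube `[0,N)³` of the torus `T_N = ℝ³/(N·ℤ³)`. -/
def cubeN (N : ℕ) : Set V3 := {x | ∀ i, x i ∈ Set.Ico (0 : ℝ) (N : ℝ)}

/-- `N·ℤ³`-periodicity of a function on `ℝ³`. -/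
def IsPerN {α : Type*} (N : ℕ) (f : V3 → α) : Prop :=
  ∀ (x : V3) (k : Fin 3 → ℤ), f (x + fun i => (N : ℝ) * (k i : ℝ)) = f x

/-- Index set for `Γ_N = {0,…,N−1}³`. -/
abbrev GammaIdx (N : ℕ) : Type := Fin 3 → Fin N

/-- The lattice point of `Γ_N` associated to an index. -/
def embG {N : ℕ} (n : GammaIdx N) : V3 := fun i => ((n i : ℕ) : ℝ)

/-- Fourier coefficient `f̂(ξ) = ∫_{T_N} e^{iξ·x} f(x) dx`. -/
def fCoeff (N : ℕ) (f : V3 → ℂ) (ξ : V3) : ℂ :=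
  ∫ x in cubeN N, Complex.exp (Complex.I * ((dotP ξ x : ℝ) : ℂ)) * f x

/-- Fourier coefficient of a real-valued function. -/
def fCoeffR (N : ℕ) (f : V3 → ℝ) (ξ : V3) : ℂ :=
  fCoeff N (fun x => ((f x : ℝ) : ℂ)) ξ

/-- The point `(2π/N)·k` of the dual lattice `Γ*_N`. -/
def xiN (N : ℕ) (k : Fin 3 → ℤ) : V3 := fun i => (2 * π / (N : ℝ)) * (k i : ℝ)

/-- The Jellium condition: `σ̂(ξ) = 0` for all `ξ ∈ Γ*_1 \ {0}`. -/
def JelliumCond (N : ℕ) (σ : V3 → ℝ) : Prop :=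
  ∀ k : Fin 3 → ℤ, k ≠ 0 → fCoeffR N σ (fun i => 2 * π * (k i : ℝ)) = 0

/-- `(2π/N)·k ∈ Γ*_1`, i.e. every coordinate of `k` is divisible by `N`. -/
def inGamma1 (N : ℕ) (k : Fin 3 → ℤ) : Prop := ∀ i, (N : ℤ) ∣ k i

/-- `|∇φ(x)|²` for a complex-valued function. -/
def gradSq (φ : V3 → ℂ) (x : V3) : ℝ :=
  ∑ i, Complex.normSq (fderiv ℝ φ x (Pi.single i 1))

/-- Gradient of a real-valued function on `ℝ³`. -/
def gradV (f : V3 → ℝ) (x : V3) : V3 := fun i => fderiv ℝ f x (Pi.single i 1)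

/-- Total charge density `ρ(x) = ∑_n σ(x−n−q(n)) − e|ψ(x)|²`. -/
def rhoT (N : ℕ) (σ : V3 → ℝ) (e : ℝ) (ψ : V3 → ℂ) (q : GammaIdx N → V3) (x : V3) : ℝ :=
  (∑ n : GammaIdx N, σ (x - embG n - q n)) - e * Complex.normSq (ψ x)

/-- `∑_{ξ∈Γ*_N\{0}} |f̂(ξ)|²/|ξ|²`. -/
def dualSum (N : ℕ) (f : V3 → ℝ) : ℝ :=
  ∑' k : Fin 3 → ℤ, if k = 0 then 0 else
    Complex.normSq (fCoeffR N f (xiN N k)) / nsqV (xiN N k)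

/-- The energy functional `E(ψ,q,p)`. -/
def energyE (N : ℕ) (σ : V3 → ℝ) (e M : ℝ) (ψ : V3 → ℂ) (q p : GammaIdx N → V3) : ℝ :=
  (1 / 2) * (∫ x in cubeN N, gradSq ψ x)
    + (2 * (N : ℝ) ^ 3)⁻¹ * dualSum N (rhoT N σ e ψ q)
    + (2 * M)⁻¹ * ∑ n : GammaIdx N, nsqV (p n)

/-- The matrix `Σ(θ) = ∑_{m∈ℤ³} (ξξᵀ/|ξ|²)|σ̂(ξ)|²`, `ξ = θ + 2πm`. -/
def SigMat (N : ℕ) (σ : V3 → ℝ) (θ : V3) : Matrix (Fin 3) (Fin 3) ℝ :=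
  Matrix.of fun a b => ∑' m : Fin 3 → ℤ,
    ((θ a + 2 * π * (m a : ℝ)) * (θ b + 2 * π * (m b : ℝ))
        / nsqV (fun i => θ i + 2 * π * (m i : ℝ)))
      * Complex.normSq (fCoeffR N σ (fun i => θ i + 2 * π * (m i : ℝ)))

/-- The Wiener condition: `Σ(θ)` is positive definite for all `θ ∈ Γ*_N \ Γ*_1`. -/
def WienerCond (N : ℕ) (σ : V3 → ℝ) : Prop :=
  ∀ k : Fin 3 → ℤ, ¬ inGamma1 N k → (SigMat N σ (xiN N k)).PosDef

/-- First-order ionic density `σ⁽¹⁾(x) = −∑_n κ(n)·∇σ(x−n−r)`. -/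
def sigma1F (N : ℕ) (σ : V3 → ℝ) (r : V3) (κ : GammaIdx N → V3) (x : V3) : ℝ :=
  - ∑ n : GammaIdx N, dotP (κ n) (gradV σ (x - embG n - r))

/-- First-order charge density `ρ⁽¹⁾(x) = σ⁽¹⁾(x) − 2e√Z·Re(e^{−iα}φ(x))`. -/
def rho1F (N : ℕ) (σ : V3 → ℝ) (e Z α : ℝ) (r : V3) (κ : GammaIdx N → V3)
    (φ : V3 → ℂ) (x : V3) : ℝ :=
  sigma1F N σ r κ x - 2 * e * Real.sqrt Z * (Complex.exp (-Complex.I * (α : ℂ)) * φ x).re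

/-- The quadratic form `B(φ,κ,p)` (half of the energy Hessian). -/
def BformQ (N : ℕ) (σ : V3 → ℝ) (e Z M α : ℝ) (r : V3)
    (φ : V3 → ℂ) (κ p : GammaIdx N → V3) : ℝ :=
  (1 / 2) * (∫ x in cubeN N, gradSq φ x)
    + (2 * (N : ℝ) ^ 3)⁻¹ * dualSum N (rho1F N σ e Z α r κ φ)
    + (2 * M)⁻¹ * ∑ n : GammaIdx N, nsqV (p n)

/-- Second-order charge density `ρ⁽²⁾`. -/
def rho2F (N : ℕ) (σ : V3 → ℝ) (e : ℝ) (r : V3) (κ : GammaIdx N → V3)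
    (φ : V3 → ℂ) (x : V3) : ℝ :=
  (∑ n : GammaIdx N,
      (σ (x - embG n - r - κ n) - σ (x - embG n - r)
        + dotP (κ n) (gradV σ (x - embG n - r))))
    - e * Complex.normSq (φ x)

/-- The pairing `(f, Gg) = N⁻³ ∑_{ξ∈Γ*_N\{0}} Re(f̂(ξ)·conj(ĝ(ξ)))/|ξ|²`. -/
def GPair (N : ℕ) (f g : V3 → ℝ) : ℝ :=
  ((N : ℝ) ^ 3)⁻¹ * ∑' k : Fin 3 → ℤ, if k = 0 then 0 else
    (fCoeffR N f (xiN N k) * (starRingEnd ℂ) (fCoeffR N g (xiN N k))).re / nsqV (xiN N k)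

/-- The distance to the solitary manifold of ground states. -/
def distS (N : ℕ) (Z : ℝ) (ψ : V3 → ℂ) (q p : GammaIdx N → V3) : ℝ :=
  ⨅ (α : ℝ) (r : V3),
    (Real.sqrt (∫ x in cubeN N,
        (Complex.normSq (ψ x - Complex.exp (Complex.I * (α : ℂ)) * ((Real.sqrt Z : ℝ) : ℂ))
          + gradSq ψ x))
      + Real.sqrt (∑ n : GammaIdx N, ⨅ k : Fin 3 → ℤ,
          nsqV (fun i => q n i - r i - (N : ℝ) * (k i : ℝ)))
      + Real.sqrt (∑ n : GammaIdx N, nsqV (p n)))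

/-- The discrete Fourier transform `κ̂(θ) ∈ ℂ³` of `κ : Γ_N → ℝ³`. -/
def hatK (N : ℕ) (κ : GammaIdx N → V3) (θ : V3) (a : Fin 3) : ℂ :=
  ∑ n : GammaIdx N, Complex.exp (Complex.I * ((dotP θ (embG n) : ℝ) : ℂ)) * ((κ n a : ℝ) : ℂ)

/-- Laplacian of a complex-valued function on `ℝ³`. -/
def lapC (f : V3 → ℂ) (x : V3) : ℂ :=
  ∑ i, fderiv ℝ (fun y => fderiv ℝ f y (Pi.single i 1)) x (Pi.single i 1)

/-- Laplacian of a real-valued function on `ℝ³`. -/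
def lapR (f : V3 → ℝ) (x : V3) : ℝ :=
  ∑ i, fderiv ℝ (fun y => fderiv ℝ f y (Pi.single i 1)) x (Pi.single i 1)

/-- A classical solution of the Schrödinger–Poisson–Newton system on `ℝ`. -/
structure IsSPN (N : ℕ) (σ : V3 → ℝ) (e M : ℝ)
    (ψ : V3 → ℝ → ℂ) (Φ : V3 → ℝ → ℝ) (q : ℝ → GammaIdx N → V3) : Prop where
  per_psi : ∀ t : ℝ, IsPerN N (fun x => ψ x t)
  per_Phi : ∀ t : ℝ, IsPerN N (fun x => Φ x t)
  regx_psi : ∀ t : ℝ, ContDiff ℝ 2 (fun x => ψ x t)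
  regt_psi : ∀ x : V3, ContDiff ℝ 1 (fun t => ψ x t)
  regx_Phi : ∀ t : ℝ, ContDiff ℝ 2 (fun x => Φ x t)
  regt_Phi : ∀ x : V3, ContDiff ℝ 1 (fun t => Φ x t)
  reg_q : ContDiff ℝ 2 q
  schrodinger : ∀ (x : V3) (t : ℝ),
    Complex.I * deriv (fun s => ψ x s) t =
      -(1 / 2 : ℂ) * lapC (fun y => ψ y t) x - ((e : ℝ) : ℂ) * ((Φ x t : ℝ) : ℂ) * ψ x t
  poisson : ∀ (x : V3) (t : ℝ),
    - lapR (fun y => Φ y t) x =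
      (∑ n : GammaIdx N, σ (x - embG n - q t n)) - e * Complex.normSq (ψ x t)
  newton : ∀ (n : GammaIdx N) (t : ℝ) (i : Fin 3),
    M * deriv (fun s => deriv (fun u => q u n i) s) t =
      - ∫ x in cubeN N, fderiv ℝ (fun y => Φ y t) x (Pi.single i 1) * σ (x - embG n - q t n)

/-- The basic Jellium density: `eZ` on the unit cell `[−1/2,1/2)³ mod N·ℤ³`, zero elsewhere. -/
def jelliumCell (N : ℕ) (e Z : ℝ) : V3 → ℝ :=
  Set.indicator
    {x : V3 | ∀ i, ∃ k : ℤ, x i - (N : ℝ) * (k : ℝ) ∈ Set.Ico (-(1 / 2) : ℝ) (1 / 2)}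
    (fun _ => e * Z)


/-- The window `[0,1/2) ∪ [N−1/2,N)`. -/
def Uset (N : ℕ) : Set ℝ := Set.Ico (0:ℝ) (1/2) ∪ Set.Ico ((N:ℝ)-1/2) (N:ℝ)

lemma memU (N : ℕ) (hN : 2 ≤ N) (t : ℝ) :
    t ∈ Uset N ↔
      t ∈ Set.Ico (0:ℝ) (N:ℝ) ∧ ∃ m : ℤ, t - (N:ℝ)*(m:ℝ) ∈ Set.Ico (-(1/2):ℝ) (1/2) := by
  have hN2 : (2:ℝ) ≤ N := by exact_mod_cast hN
  constructor
  · rintro (⟨h0, h1⟩ | ⟨h0, h1⟩)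
    · exact ⟨⟨h0, by linarith⟩, 0, by constructor <;> (push_cast; linarith)⟩
    · exact ⟨⟨by linarith, h1⟩, 1, by constructor <;> (push_cast; linarith)⟩
  · rintro ⟨⟨h0, h1⟩, m, hm0, hm1⟩
    rcases le_or_gt m 0 with hm | hm
    · left
      have hNm : (N:ℝ) * (m:ℝ) ≤ 0 :=
        mul_nonpos_of_nonneg_of_nonpos (by positivity) (by exact_mod_cast hm)
      exact ⟨h0, by linarith⟩
    · right
      have hm1' : (1:ℝ) ≤ (m:ℝ) := by exact_mod_cast hm
      have hNm : (N:ℝ) * 1 ≤ (N:ℝ) * (m:ℝ) :=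
        mul_le_mul_of_nonneg_left hm1' (by positivity)
      constructor <;> linarith [mul_one (N:ℝ)]

lemma oneD (N : ℕ) (hN : 2 ≤ N) (k : ℤ) :
    (∫ t : ℝ, Set.indicator (Uset N)
      (fun t => Complex.exp (Complex.I * ((2*π/(N:ℝ)*(k:ℝ) * t : ℝ) : ℂ))) t)
    = if k = 0 then 1 else
        (((2 * Real.sin ((2*π/(N:ℝ)*(k:ℝ))/2) / (2*π/(N:ℝ)*(k:ℝ)) : ℝ)) : ℂ) := by
  have hN2 : (2:ℝ) ≤ N := by exact_mod_cast hN
  set c : ℝ := 2*π/(N:ℝ)*(k:ℝ) with hc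
  clear_value c
  have hdisj : Disjoint (Set.Ico (0:ℝ) (1/2)) (Set.Ico ((N:ℝ)-1/2) (N:ℝ)) := by
    rw [Set.disjoint_left]
    rintro t ⟨_, h1⟩ ⟨h2, _⟩
    linarith
  have hcont : Continuous (fun t : ℝ => Complex.exp (Complex.I * ((c * t : ℝ) : ℂ))) := by
    continuity
  rw [Uset, MeasureTheory.integral_indicator (by measurability)]
  rw [MeasureTheory.setIntegral_union hdisj measurableSet_Ico
    ((hcont.continuousOn.integrableOn_compact isCompact_Icc).mono_set Set.Ico_subset_Icc_self)
    ((hcont.continuousOn.integrableOn_compact isCompact_Icc).mono_set Set.Ico_subset_Icc_self)]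
  rw [MeasureTheory.integral_Ico_eq_integral_Ioo, MeasureTheory.integral_Ico_eq_integral_Ioo,
    ← MeasureTheory.integral_Ioc_eq_integral_Ioo, ← MeasureTheory.integral_Ioc_eq_integral_Ioo,
    ← intervalIntegral.integral_of_le (by norm_num : (0:ℝ) ≤ 1/2),
    ← intervalIntegral.integral_of_le (by linarith : (N:ℝ)-1/2 ≤ (N:ℝ))]
  by_cases hk : k = 0
  · subst hk
    simp only [hc, Int.cast_zero, mul_zero, zero_mul, Complex.ofReal_zero, Complex.exp_zero,
      if_true]
    rw [intervalIntegral.integral_const, intervalIntegral.integral_const]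
    ring_nf
    norm_num
  · rw [if_neg hk]
    have hcne : c ≠ 0 := by
      simp only [hc]
      have : (k:ℝ) ≠ 0 := Int.cast_ne_zero.mpr hk
      positivity
    have hIc : Complex.I * (c:ℂ) ≠ 0 := by
      simp [Complex.I_ne_zero, Complex.ofReal_ne_zero, hcne]
    simp_rw [Complex.ofReal_mul, ← mul_assoc]
    rw [integral_exp_mul_complex hIc, integral_exp_mul_complex hIc]
    have hcN : ((c:ℂ)) * (N:ℂ) = (k:ℂ) * (2*π) := by
      have : c * (N:ℝ) = (k:ℝ) * (2*π) := by
        rw [hc, div_mul_eq_mul_div, div_mul_eq_mul_div, div_eq_iff (ne_of_gt (by linarith : (0:ℝ) < N))]; ring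
      calc ((c:ℂ)) * (N:ℂ) = (((c * (N:ℝ)):ℝ):ℂ) := by push_cast; ring
      _ = (k:ℂ) * (2*π) := by rw [this]; push_cast; ring
    have hexpN : Complex.exp (Complex.I * (c:ℂ) * (N:ℂ)) = 1 := by
      rw [mul_assoc, hcN]
      calc Complex.exp (Complex.I * ((k:ℂ) * (2*π))) = Complex.exp ((k:ℂ) * (2*π*Complex.I)) := by
            ring_nf
      _ = 1 := Complex.exp_int_mul_two_pi_mul_I k
    have hsplit : Complex.exp (Complex.I * (c:ℂ) * (((N:ℝ)-1/2 : ℝ):ℂ)) =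
        Complex.exp (-(Complex.I * (c:ℂ) * (1/2))) := by
      have : Complex.I * (c:ℂ) * (((N:ℝ)-1/2 : ℝ):ℂ) =
          Complex.I * (c:ℂ) * (N:ℂ) + (-(Complex.I * (c:ℂ) * (1/2))) := by
        push_cast; ring
      rw [this, Complex.exp_add, hexpN, one_mul]
    rw [hsplit]
    have h0 : Complex.exp (Complex.I * (c:ℂ) * ((0:ℝ):ℂ)) = 1 := by
      simp
    rw [h0]
    push_cast [Complex.ofReal_sin]
    rw [Complex.sin]
    have hA : Complex.exp (-((c:ℂ)/2) * Complex.I) =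
        Complex.exp (-(Complex.I * (c:ℂ) * (1/2))) := by
      congr 1; ring
    have hB : Complex.exp (((c:ℂ)/2) * Complex.I) = Complex.exp (Complex.I * (c:ℂ) * (1/2)) := by
      congr 1; ring
    rw [hA, hB, hexpN]
    have hcC : (c:ℂ) ≠ 0 := Complex.ofReal_ne_zero.mpr hcne
    generalize Complex.exp (Complex.I * (c:ℂ) * (1/2)) = E
    generalize Complex.exp (-(Complex.I * (c:ℂ) * (1/2))) = F
    field_simp
    linear_combination (E - F) * Complex.I_mul_I

lemma coeff_eq (N : ℕ) (hN : 2 ≤ N) (e Z : ℝ) (k : Fin 3 → ℤ) :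
    fCoeffR N (jelliumCell N e Z) (xiN N k) =
      ((e * Z : ℝ) : ℂ) * ∏ j : Fin 3,
        (if k j = 0 then 1
          else (((2 * Real.sin (xiN N k j / 2) / xiN N k j : ℝ)) : ℂ)) := by
  have hmeas : MeasurableSet (cubeN N) := by
    have hcube : cubeN N = Set.univ.pi (fun _ : Fin 3 => Set.Ico (0:ℝ) (N:ℝ)) := by
      ext x; simp [cubeN, Set.mem_univ_pi]
    rw [hcube]; exact MeasurableSet.univ_pi fun _ => measurableSet_Ico
  rw [fCoeffR, fCoeff, ← MeasureTheory.integral_indicator hmeas]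
  have hfun : ∀ x : V3,
      (cubeN N).indicator (fun x => Complex.exp (Complex.I * ((dotP (xiN N k) x : ℝ):ℂ))
          * ((jelliumCell N e Z x : ℝ):ℂ)) x
        = ((e*Z:ℝ):ℂ) * ∏ j : Fin 3,
            Set.indicator (Uset N)
              (fun t => Complex.exp (Complex.I * ((xiN N k j * t : ℝ):ℂ))) (x j) := by
    intro x
    by_cases hx : x ∈ cubeN N
    · rw [Set.indicator_of_mem hx]
      by_cases hS : ∀ i, ∃ m : ℤ, x i - (N:ℝ) * (m:ℝ) ∈ Set.Ico (-(1/2):ℝ) (1/2)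
      · have each : ∀ j, x j ∈ Uset N := fun j => (memU N hN (x j)).2 ⟨hx j, hS j⟩
        have hprod : (∏ j : Fin 3, Set.indicator (Uset N)
              (fun t => Complex.exp (Complex.I * ((xiN N k j * t : ℝ):ℂ))) (x j))
            = ∏ j : Fin 3, Complex.exp (Complex.I * ((xiN N k j * x j : ℝ):ℂ)) :=
          Finset.prod_congr rfl fun j _ => Set.indicator_of_mem (each j) _
        rw [hprod]
        have hjel : jelliumCell N e Z x = e * Z :=
          Set.indicator_of_mem (show x ∈ {x : V3 | ∀ i, ∃ k : ℤ,
            x i - (N : ℝ) * (k : ℝ) ∈ Set.Ico (-(1 / 2) : ℝ) (1 / 2)} from hS) _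
        rw [hjel]
        have hdot : Complex.I * ((dotP (xiN N k) x : ℝ):ℂ)
            = ∑ j : Fin 3, Complex.I * ((xiN N k j * x j : ℝ):ℂ) := by
          rw [dotP]; push_cast; rw [Finset.mul_sum]
        rw [hdot, Complex.exp_sum]
        ring
      · push_neg at hS
        obtain ⟨i, hi⟩ := hS
        have hjel : jelliumCell N e Z x = 0 :=
          Set.indicator_of_notMem (fun h => by obtain ⟨m, hm⟩ := h i; exact hi m hm) _
        have hfac : Set.indicator (Uset N)
            (fun t => Complex.exp (Complex.I * ((xiN N k i * t : ℝ):ℂ))) (x i) = 0 :=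
          Set.indicator_of_notMem
            (fun h => by obtain ⟨m, hm⟩ := ((memU N hN (x i)).1 h).2; exact hi m hm) _
        rw [hjel, Finset.prod_eq_zero (Finset.mem_univ i) hfac]
        simp
    · rw [Set.indicator_of_notMem hx]
      have hx' : ∃ i, x i ∉ Set.Ico (0:ℝ) (N:ℝ) := by
        by_contra h; push_neg at h; exact hx h
      obtain ⟨i, hi⟩ := hx'
      have hfac : Set.indicator (Uset N)
          (fun t => Complex.exp (Complex.I * ((xiN N k i * t : ℝ):ℂ))) (x i) = 0 :=
        Set.indicator_of_notMem (fun h => hi ((memU N hN (x i)).1 h).1) _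
      rw [Finset.prod_eq_zero (Finset.mem_univ i) hfac]
      simp
  rw [MeasureTheory.integral_congr_ae (Filter.Eventually.of_forall hfun),
    MeasureTheory.integral_const_mul,
    MeasureTheory.integral_fintype_prod_volume_eq_prod (𝕜 := ℂ) (ι := Fin 3)
      (f := fun j t => Set.indicator (Uset N)
        (fun s => Complex.exp (Complex.I * ((xiN N k j * s : ℝ):ℂ))) t)]
  congr 1
  refine Finset.prod_congr rfl fun j _ => ?_
  simpa only [xiN] using oneD N hN (k j)

lemma coeff_zero (N : ℕ) (hN : 2 ≤ N) (e Z : ℝ) (k : Fin 3 → ℤ) (j : Fin 3)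
    (hj : k j ≠ 0) (hdvd : (N:ℤ) ∣ k j) :
    fCoeffR N (jelliumCell N e Z) (xiN N k) = 0 := by
  rw [coeff_eq N hN e Z k]
  obtain ⟨m, hm⟩ := hdvd
  have hN0 : (N:ℝ) ≠ 0 := Nat.cast_ne_zero.mpr (by omega)
  have hfac : (if k j = 0 then (1:ℂ)
      else (((2 * Real.sin (xiN N k j / 2) / xiN N k j : ℝ)):ℂ)) = 0 := by
    rw [if_neg hj]
    have hxi : xiN N k j = 2*π/(N:ℝ)*((k j : ℤ):ℝ) := rfl
    have hhalf : xiN N k j / 2 = (m:ℝ) * π := by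
      rw [hxi, hm]
      push_cast
      field_simp
    rw [hhalf, Real.sin_int_mul_pi]
    norm_num
  rw [Finset.prod_eq_zero (Finset.mem_univ j) hfac, mul_zero]

/-- the basic Jellium example satisfies the Jellium condition but
violates the Wiener condition. -/
theorem stmt14 (N : ℕ) (hN : 2 ≤ N) (e Z : ℝ) (he : 0 < e) (hZ : 0 < Z) :
    (∀ k : Fin 3 → ℤ,
        fCoeffR N (jelliumCell N e Z) (xiN N k) =
          ((e * Z : ℝ) : ℂ) * ∏ j : Fin 3,
            (if k j = 0 then 1
              else (((2 * Real.sin (xiN N k j / 2) / xiN N k j : ℝ)) : ℂ))) ∧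
      JelliumCond N (jelliumCell N e Z) ∧
      (∀ k : Fin 3 → ℤ, k 0 = 0 → ¬ inGamma1 N k →
        SigMat N (jelliumCell N e Z) (xiN N k) 0 0 = 0 ∧
          ¬ (SigMat N (jelliumCell N e Z) (xiN N k)).PosDef) := by
  refine ⟨fun k => coeff_eq N hN e Z k, ?_, ?_⟩
  · intro k hk
    have hN0 : (N:ℝ) ≠ 0 := Nat.cast_ne_zero.mpr (by omega)
    obtain ⟨j, hj⟩ := Function.ne_iff.mp hk
    have hx : (fun i => 2 * π * ((k i : ℤ):ℝ)) = xiN N (fun i => (N:ℤ) * k i) := by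
      funext i
      show _ = 2*π/(N:ℝ)*(((N:ℤ)*(k i) : ℤ):ℝ)
      push_cast
      field_simp
    rw [hx]
    exact coeff_zero N hN e Z _ j (mul_ne_zero (by exact_mod_cast hN0) hj) ⟨k j, rfl⟩
  · intro k hk0 hG1
    have hN0 : (N:ℝ) ≠ 0 := Nat.cast_ne_zero.mpr (by omega)
    have hθ0 : xiN N k 0 = 0 := by
      show 2*π/(N:ℝ)*((k 0 : ℤ):ℝ) = 0
      rw [hk0]
      simp
    have hterm : ∀ m : Fin 3 → ℤ,
        ((xiN N k 0 + 2*π*((m 0 : ℤ):ℝ)) * (xiN N k 0 + 2*π*((m 0 : ℤ):ℝ))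
            / nsqV (fun i => xiN N k i + 2*π*((m i : ℤ):ℝ)))
          * Complex.normSq (fCoeffR N (jelliumCell N e Z)
              (fun i => xiN N k i + 2*π*((m i : ℤ):ℝ))) = 0 := by
      intro m
      by_cases hm : m 0 = 0
      · rw [hθ0, hm]
        norm_num
      · have hfe : (fun i => xiN N k i + 2*π*((m i : ℤ):ℝ))
            = xiN N (fun i => k i + (N:ℤ) * m i) := by
          funext i
          show xiN N k i + _ = 2*π/(N:ℝ)*(((k i + (N:ℤ)*(m i)) : ℤ):ℝ)
          have hxi : xiN N k i = 2*π/(N:ℝ)*((k i : ℤ):ℝ) := rfl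
          rw [hxi]
          push_cast
          field_simp
        have hco : fCoeffR N (jelliumCell N e Z)
            (fun i => xiN N k i + 2*π*((m i : ℤ):ℝ)) = 0 := by
          rw [hfe]
          refine coeff_zero N hN e Z _ 0 ?_ ?_
          · rw [hk0, zero_add]
            exact mul_ne_zero (by exact_mod_cast hN0) hm
          · exact ⟨m 0, by rw [hk0, zero_add]⟩
        rw [hco]
        simp
    have hM00 : SigMat N (jelliumCell N e Z) (xiN N k) 0 0 = 0 := by
      show (∑' m : Fin 3 → ℤ, _) = (0:ℝ)
      calc (∑' m : Fin 3 → ℤ,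
            ((xiN N k 0 + 2*π*((m 0 : ℤ):ℝ)) * (xiN N k 0 + 2*π*((m 0 : ℤ):ℝ))
                / nsqV (fun i => xiN N k i + 2*π*((m i : ℤ):ℝ)))
              * Complex.normSq (fCoeffR N (jelliumCell N e Z)
                  (fun i => xiN N k i + 2*π*((m i : ℤ):ℝ))))
          = ∑' _ : Fin 3 → ℤ, (0:ℝ) := tsum_congr hterm
      _ = 0 := tsum_zero
    refine ⟨hM00, ?_⟩
    rintro ⟨hherm, hpos⟩
    have hx0 : (Pi.single 0 1 : Fin 3 → ℝ) ≠ 0 := by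
      intro h
      have := congrFun h 0
      simp at this
    have h1 := Matrix.PosDef.dotProduct_mulVec_pos ⟨hherm, hpos⟩ hx0
    have heval : dotProduct (star (Pi.single 0 1 : Fin 3 → ℝ))
        ((SigMat N (jelliumCell N e Z) (xiN N k)).mulVec (Pi.single 0 1))
        = SigMat N (jelliumCell N e Z) (xiN N k) 0 0 := by
      simp [dotProduct, Matrix.mulVec, Pi.single_apply, Finset.sum_ite_eq',
        Finset.mem_univ, star, mul_comm]
    rw [heval, hM00] at h1
    exact lt_irrefl 0 h1

end SPN
end
end

section
/- (Newton–Girard rigidity of vanishing power sums.) Let N ≥ 1 and let w : {0,…,N−1} → ℂ satisfy ∑_{j=0}^{N−1} w(j)^m = 0 for every integer m with 1 ≤ m ≤ N−1. Then there exists C ∈ ℂ such that the multiset {w(0),…,w(N−1)} equals the multiset {C·e^{2πik/N} : k = 0,…,N−1}. -/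
noncomputable section

namespace SPN

open MeasureTheory Finset
open scoped Real

/-- Newton–Girard rigidity of vanishing power sums. -/
theorem stmt15 (N : ℕ) (hN : 1 ≤ N) (w : Fin N → ℂ)
    (h : ∀ m : ℕ, 1 ≤ m → m ≤ N - 1 → (∑ j : Fin N, w j ^ m) = 0) :
    ∃ C : ℂ,
      Multiset.map w Finset.univ.val =
        Multiset.map
          (fun k : Fin N =>
            C * Complex.exp (2 * ((Real.pi : ℝ) : ℂ) * Complex.I * ((k : ℕ) : ℂ) / (N : ℂ)))
          Finset.univ.val := by
  classical
  set m : Multiset ℂ := Multiset.map w Finset.univ.val with hm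
  have hcard : Multiset.card m = N := by simp [hm]
  -- Step 1: elementary symmetric functions vanish for 1 ≤ k ≤ N-1
  have hE : ∀ k, 1 ≤ k → k ≤ N - 1 → m.esymm k = 0 := by
    intro k hk1 hk2
    have hid := congrArg (MvPolynomial.aeval w) (MvPolynomial.mul_esymm_eq_sum (Fin N) ℂ k)
    simp only [map_mul, map_sum, map_natCast, map_pow, map_neg, map_one,
      MvPolynomial.aeval_esymm_eq_multiset_esymm, MvPolynomial.psum,
      MvPolynomial.aeval_X] at hid
    rw [Finset.sum_eq_zero, mul_zero] at hid
    · have hk0 : ((k : ℂ)) ≠ 0 := Nat.cast_ne_zero.mpr (by omega)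
      have := mul_eq_zero.mp hid
      rcases this with h0 | h0
      · exact absurd h0 hk0
      · exact h0
    · intro a ha
      simp only [Finset.mem_filter, Finset.HasAntidiagonal.mem_antidiagonal] at ha
      have ha2 : 1 ≤ a.2 := by omega
      have ha2' : a.2 ≤ N - 1 := by omega
      rw [h a.2 ha2 ha2', mul_zero]
  -- Step 2: the polynomial with roots m is X^N - C c
  set c : ℂ := (-1) ^ (N + 1) * m.esymm N with hc
  have hpol : (m.map fun a => Polynomial.X - Polynomial.C a).prod
      = Polynomial.X ^ N - Polynomial.C c := by
    rw [Polynomial.ext_iff]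
    intro k
    by_cases hkN : k ≤ N
    · rw [Multiset.prod_X_sub_C_coeff m (by omega)]
      rw [Polynomial.coeff_sub, Polynomial.coeff_X_pow, Polynomial.coeff_C, hcard]
      rcases Nat.lt_trichotomy k N with hlt | heq | hgt
      · have hne : ¬ (k = N) := by omega
        rw [if_neg hne]
        by_cases hk0 : k = 0
        · subst hk0
          rw [show (if (0:ℕ) = 0 then c else 0) = c from if_pos rfl]
          rw [Nat.sub_zero, hc, pow_succ]
          ring
        · rw [if_neg hk0, hE (N - k) (by omega) (by omega), mul_zero, sub_zero]
      · subst heq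
        rw [if_pos rfl, if_neg (by omega), Nat.sub_self, pow_zero, one_mul, sub_zero]
        simp [Multiset.esymm]
      · omega
    · push_neg at hkN
      rw [Polynomial.coeff_eq_zero_of_natDegree_lt, Polynomial.coeff_sub,
        Polynomial.coeff_X_pow, Polynomial.coeff_C, if_neg (by omega), if_neg (by omega),
        sub_zero]
      rw [Polynomial.natDegree_multiset_prod_X_sub_C_eq_card, hcard]
      exact hkN
  -- Step 3: m equals the multiset of N-th roots of c
  have hroots : m = Polynomial.nthRoots N c := by
    have := Polynomial.roots_multiset_prod_X_sub_C m
    rw [hpol] at this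
    rw [← this]
    rfl
  obtain ⟨a, ha⟩ := Multiset.exists_mem_of_ne_zero
    (show m ≠ 0 by
      intro h0
      rw [h0] at hcard
      simp at hcard
      omega)
  have haN : a ^ N = c := by
    rw [hroots] at ha
    exact (Polynomial.mem_nthRoots (by omega)).1 ha
  have hζ : IsPrimitiveRoot (Complex.exp (2 * (Real.pi : ℂ) * Complex.I / (N : ℂ))) N :=
    Complex.isPrimitiveRoot_exp N (by omega)
  have hNR := hζ.nthRoots_eq haN
  refine ⟨a, ?_⟩
  have hrange : (Multiset.range N) = (Finset.univ.val : Multiset (Fin N)).map Fin.val := by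
    have h1 : (Finset.univ : Finset (Fin N)).map Fin.valEmbedding = Finset.Iio N :=
      Fin.map_valEmbedding_univ
    have h2 : Finset.range N = Finset.Iio N := (Nat.Iio_eq_range N).symm
    calc Multiset.range N = (Finset.range N).val := rfl
      _ = (Finset.Iio N).val := by rw [h2]
      _ = ((Finset.univ : Finset (Fin N)).map Fin.valEmbedding).val := by rw [h1]
      _ = (Finset.univ.val : Multiset (Fin N)).map Fin.val := Finset.map_val _ _
  calc Multiset.map w Finset.univ.val = m := hm.symm
    _ = Polynomial.nthRoots N c := hroots
    _ = (Multiset.range N).map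
          (fun j => Complex.exp (2 * (Real.pi : ℂ) * Complex.I / (N : ℂ)) ^ j * a) := hNR
    _ = Multiset.map
          (fun k : Fin N =>
            a * Complex.exp (2 * ((Real.pi : ℝ) : ℂ) * Complex.I * ((k : ℕ) : ℂ) / (N : ℂ)))
          Finset.univ.val := by
        rw [hrange, Multiset.map_map]
        apply Multiset.map_congr rfl
        intro k _
        simp only [Function.comp]
        rw [← Complex.exp_nat_mul, mul_comm]
        congr 1
        ring

end SPN
end
end
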